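/- Let A be a rank-ℓ arrangement of n ≥ 2 hyperplanes, and suppose the bigraded Hilbert polynomial of S/I(A) is given by the Hirzebruch–Riemann–Roch expression with ch(O_X) = χ̂(A, −h, k−h) + (higher order terms). Then the top-degree part (total degree n−2) of the Hilbert polynomial p_{S/I}(p, q) equals (1/(n−2)!) Σ_{i=1}^{ℓ} t_{i0} C(n−2, i−1) p^{i−1} q^{n−1−i}, where t_{i0} are Tutte polynomial coefficients; in particular this top-degree part is determined by the underlying matroid. Purely algebraically: the coefficient extraction [h^{ℓ−1} k^{n−1}] of χ̂(A, −h, k−h)·(ph+qk)^{n−2}/(n−2)! in ℤ[h,k]/(h^ℓ, k^n) equals (1/(n−2)!) Σ_{i=1}^{ℓ} t_{i0} C(n−2, i−1) p^{i−1} q^{n−1−i}. -/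

import Mathlib

/- STATEMENT 13: for a central essential rank-ℓ arrangement A of n ≥ 2
hyperplanes, the purely algebraic form of the leading term of the Hilbert
polynomial: the coefficient of h^{ℓ−1} k^{n−1} in
χ̂(A, −h, k−h)·(p·h + q·k)^{n−2}/(n−2)! equals
(1/(n−2)!) Σ_{i=1}^{ℓ} t_{i0} C(n−2, i−1) p^{i−1} q^{n−1−i}, where t_{i0} are
the Tutte coefficients.  Here `h = X 0`, `k = X 1` in `ℚ[h,k]`. -/

open MvPolynomial

variable {V : Type*} [AddCommGroup V] [Module ℂ V] [FiniteDimensional ℂ V]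

/-- rank of a set of subspaces: codimension of its intersection. -/
noncomputable def rk (S : Finset (Submodule ℂ V)) : ℕ :=
  Module.finrank ℂ V - Module.finrank ℂ (S.inf id : Submodule ℂ V)

/-- Tutte polynomial of the arrangement, `x = X 0`, `y = X 1`. -/
noncomputable def tutteA (A : Finset (Submodule ℂ V)) : MvPolynomial (Fin 2) ℤ :=
  ∑ S ∈ A.powerset, (X 0 - 1) ^ (rk A - rk S) * (X 1 - 1) ^ (S.card - rk S)

/-- `χ̂(A, −h, k−h) = Σ_S (−1)^{|S|} (−h)^{r(S)} (k−h)^{ℓ−r(S)}` over ℚ. -/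
noncomputable def chihatSub (A : Finset (Submodule ℂ V)) : MvPolynomial (Fin 2) ℚ :=
  ∑ S ∈ A.powerset, C ((-1 : ℚ) ^ S.card) *
    (-(X 0)) ^ (rk S) * (X 1 - X 0) ^ (rk A - rk S)

section Aux

open Finset

lemma single_pair_eq' (a b A B : ℕ) :
    (Finsupp.single (0:Fin 2) a + Finsupp.single 1 b = Finsupp.single 0 A + Finsupp.single 1 B)
      ↔ a = A ∧ b = B := by
  constructor
  · intro h
    exact ⟨by simpa using DFunLike.congr_fun h 0, by simpa using DFunLike.congr_fun h 1⟩
  · rintro ⟨rfl, rfl⟩; rfl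

lemma coeff_CXX {R : Type*} [CommSemiring R] (c : R) (a b A B : ℕ) :
    MvPolynomial.coeff (Finsupp.single 0 A + Finsupp.single 1 B)
      (MvPolynomial.C c * X (0:Fin 2) ^ a * X 1 ^ b) = if a = A ∧ b = B then c else 0 := by
  rw [mul_assoc, X_pow_eq_monomial, X_pow_eq_monomial, monomial_mul, mul_one,
    C_mul_monomial, mul_one, coeff_monomial]
  simp [single_pair_eq']

lemma expandXsub (e d : ℕ) :
    ((X 0 - 1 : MvPolynomial (Fin 2) ℤ)) ^ e * (X 1 - 1) ^ d =
      ∑ a ∈ range (e+1), ∑ b ∈ range (d+1),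
        C ((-1:ℤ)^(a+e) * (-1)^(b+d) * e.choose a * d.choose b) * X 0 ^ a * X 1 ^ b := by
  rw [sub_pow, sub_pow, Finset.sum_mul_sum]
  refine Finset.sum_congr rfl fun a _ => Finset.sum_congr rfl fun b _ => ?_
  simp only [map_mul, map_pow, map_neg, map_one, map_natCast, one_pow]
  ring

lemma coeff_tutte_term (e d i : ℕ) :
    MvPolynomial.coeff (Finsupp.single 0 i)
      (((X 0 - 1 : MvPolynomial (Fin 2) ℤ)) ^ e * (X 1 - 1) ^ d) =
      (-1:ℤ)^(i+e) * (-1)^d * e.choose i := by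
  have hm : (Finsupp.single (0:Fin 2) i) = Finsupp.single 0 i + Finsupp.single 1 0 := by simp
  rw [expandXsub, hm]
  simp only [coeff_sum, coeff_CXX]
  have h1 : ∀ a ∈ range (e+1),
      (∑ b ∈ range (d+1), if a = i ∧ b = 0 then
        (-1:ℤ)^(a+e) * (-1)^(b+d) * e.choose a * d.choose b else 0) =
      if a = i then (-1:ℤ)^(a+e) * (-1)^(0+d) * e.choose a * d.choose 0 else 0 := by
    intro a _
    by_cases ha : a = i
    · subst ha; simp
    · simp [ha]
  rw [Finset.sum_congr rfl h1, Finset.sum_ite_eq']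
  by_cases hie : i ≤ e
  · simp [Finset.mem_range, Nat.lt_succ_iff, hie]
  · rw [if_neg (by simp [Finset.mem_range]; omega)]
    rw [Nat.choose_eq_zero_of_lt (by omega)]
    simp

lemma expandChi (r e c : ℕ) :
    (C ((-1:ℚ)^c) * (-(X 0))^r * (X 1 - X 0)^e : MvPolynomial (Fin 2) ℚ) =
      ∑ j ∈ range (e+1),
        C ((-1:ℚ)^c * (-1)^r * (-1)^(j+e) * e.choose j) * X 0 ^ (r + (e - j)) * X 1 ^ j := by
  rw [sub_pow, Finset.mul_sum]
  refine Finset.sum_congr rfl fun j _ => ?_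
  rw [neg_pow (X 0 : MvPolynomial (Fin 2) ℚ) r, pow_add (X 0 : MvPolynomial (Fin 2) ℚ) r (e - j)]
  simp only [map_mul, map_pow, map_neg, map_one, map_natCast]
  ring

lemma expandPQ (p q : ℚ) (m : ℕ) :
    ((C p * X 0 + C q * X 1 : MvPolynomial (Fin 2) ℚ))^m =
      ∑ j ∈ range (m+1), C (p^j * q^(m-j) * m.choose j) * X 0 ^ j * X 1 ^ (m - j) := by
  rw [add_pow]
  refine Finset.sum_congr rfl fun j _ => ?_
  rw [mul_pow, mul_pow]
  simp only [map_mul, map_pow, map_natCast]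
  ring

lemma key {ι : Type*} (T : Finset ι) (r c : ι → ℕ) (ℓ n : ℕ)
    (hr : ∀ S ∈ T, r S ≤ ℓ) (hrc : ∀ S ∈ T, r S ≤ c S) (hℓ : 1 ≤ ℓ) (hn : 2 ≤ n)
    (p q : ℚ) :
    MvPolynomial.coeff (Finsupp.single 0 (ℓ-1) + Finsupp.single 1 (n-1))
      ((∑ S ∈ T, C ((-1:ℚ)^(c S)) * (-(X 0))^(r S) * ((X 1 - X 0 : MvPolynomial (Fin 2) ℚ))^(ℓ - r S)) *
        (C p * X 0 + C q * X 1) ^ (n-2)) =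
    ∑ i ∈ Finset.Icc 1 ℓ,
      ((MvPolynomial.coeff (Finsupp.single 0 i)
          (∑ S ∈ T, ((X 0 - 1 : MvPolynomial (Fin 2) ℤ))^(ℓ - r S) * (X 1 - 1)^(c S - r S)) : ℤ) : ℚ) *
        ((n-2).choose (i-1)) * p^(i-1) * q^(n-1-i) := by
  classical
  set m := n - 2 with hm
  -- the rational "tutte coefficients"
  set t : ℕ → ℚ := fun i => ∑ S ∈ T, (-1:ℚ)^(i + (ℓ - r S)) * (-1)^(c S - r S) * ((ℓ - r S).choose i)
    with ht
  -- Step B : rewrite the chihat sum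
  have hchi : (∑ S ∈ T, C ((-1:ℚ)^(c S)) * (-(X 0))^(r S) * ((X 1 - X 0 : MvPolynomial (Fin 2) ℚ))^(ℓ - r S)) =
      ∑ i ∈ range (ℓ+1), C (t i) * X 0 ^ (ℓ - i) * X 1 ^ i := by
    have hterm : ∀ S ∈ T,
        C ((-1:ℚ)^(c S)) * (-(X 0))^(r S) * ((X 1 - X 0 : MvPolynomial (Fin 2) ℚ))^(ℓ - r S) =
        ∑ i ∈ range (ℓ+1),
          C ((-1:ℚ)^(i + (ℓ - r S)) * (-1)^(c S - r S) * ((ℓ - r S).choose i)) *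
            X 0 ^ (ℓ - i) * X 1 ^ i := by
      intro S hS
      rw [expandChi]
      rw [Finset.sum_subset (show range ((ℓ - r S)+1) ⊆ range (ℓ+1) from
        Finset.range_subset_range.2 (by have := hr S hS; omega))]
      · refine Finset.sum_congr rfl fun j hj => ?_
        by_cases hj' : j ≤ ℓ - r S
        · have h1 : r S + (ℓ - r S - j) = ℓ - j := by have := hr S hS; omega
          have h2 : (-1:ℚ)^(c S) * (-1)^(r S) * (-1)^(j + (ℓ - r S)) =
              (-1:ℚ)^(j + (ℓ - r S)) * (-1)^(c S - r S) := by
            have h3 : c S + r S = (c S - r S) + 2 * r S := by have := hrc S hS; omega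
            have : ((-1:ℚ)^(c S) * (-1)^(r S)) = (-1:ℚ)^(c S - r S) := by
              rw [← pow_add, h3, pow_add, pow_mul]
              norm_num
            rw [mul_comm ((-1:ℚ)^(c S) * (-1)^(r S)), this]
          rw [h1, h2]
        · have hz : ((ℓ - r S).choose j) = 0 := Nat.choose_eq_zero_of_lt (by omega)
          rw [hz]
          simp
      · intro j _ hj
        have hz : ((ℓ - r S).choose j) = 0 :=
          Nat.choose_eq_zero_of_lt (by simp [Finset.mem_range] at hj ⊢; omega)
        rw [hz]
        simp
    rw [Finset.sum_congr rfl hterm, Finset.sum_comm]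
    refine Finset.sum_congr rfl fun i _ => ?_
    rw [ht]
    simp only [map_sum]
    rw [Finset.sum_mul, Finset.sum_mul]
  -- Step A : the tutte coefficients
  have htut : ∀ i, ((∑ S ∈ T, MvPolynomial.coeff (Finsupp.single 0 i)
      (((X 0 - 1 : MvPolynomial (Fin 2) ℤ))^(ℓ - r S) * (X 1 - 1)^(c S - r S)) : ℤ) : ℚ)
      = t i := by
    intro i
    push_cast
    refine Finset.sum_congr rfl fun S _ => ?_
    rw [coeff_tutte_term]
    push_cast
    ring
  -- Step C : compute the coefficient of the product
  rw [hchi, expandPQ, Finset.sum_mul_sum]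
  simp only [coeff_sum]
  have hcoef : ∀ i ∈ range (ℓ+1), ∀ j ∈ range (m+1),
      MvPolynomial.coeff (Finsupp.single 0 (ℓ-1) + Finsupp.single 1 (n-1))
        ((C (t i) * X (0:Fin 2) ^ (ℓ - i) * X 1 ^ i) * (C (p^j * q^(m-j) * m.choose j) * X 0 ^ j * X 1 ^ (m - j)))
      = if j = i - 1 ∧ 1 ≤ i then t i * (p^j * q^(m-j) * m.choose j) else 0 := by
    intro i hi j hj
    have hprod : (C (t i) * X (0:Fin 2) ^ (ℓ - i) * X 1 ^ i) * (C (p^j * q^(m-j) * m.choose j) * X 0 ^ j * X 1 ^ (m - j))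
        = C (t i * (p^j * q^(m-j) * m.choose j)) * X 0 ^ ((ℓ - i) + j) * X 1 ^ (i + (m - j)) := by
      simp only [map_mul, pow_add]; ring
    rw [hprod]
    rw [coeff_CXX]
    simp only [Finset.mem_range, Nat.lt_succ_iff] at hi hj
    congr 1
    simp only [eq_iff_iff]
    constructor
    · rintro ⟨h1, h2⟩; omega
    · rintro ⟨h1, h2⟩; omega
  rw [Finset.sum_congr rfl fun i hi => Finset.sum_congr rfl fun j hj => hcoef i hi j hj]
  have hinner : ∀ i ∈ range (ℓ+1),
      (∑ j ∈ range (m+1), if j = i - 1 ∧ 1 ≤ i then t i * (p^j * q^(m-j) * m.choose j) else 0)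
      = if i ∈ Finset.Icc 1 ℓ then
          (if i - 1 ≤ m then t i * (p^(i-1) * q^(m-(i-1)) * m.choose (i-1)) else 0) else 0 := by
    intro i hi
    simp only [Finset.mem_range, Nat.lt_succ_iff] at hi
    by_cases h1 : 1 ≤ i
    · simp only [h1, and_true, Finset.sum_ite_eq', Finset.mem_range, Nat.lt_succ_iff,
        Finset.mem_Icc, hi]
      simp [h1]
    · simp [h1, Finset.mem_Icc]
  rw [Finset.sum_congr rfl hinner, Finset.sum_ite_mem,
    Finset.inter_eq_right.2 (fun i hi => by simp [Finset.mem_Icc] at hi; simp [Finset.mem_range]; omega)]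
  refine Finset.sum_congr rfl fun i hi => ?_
  simp only [Finset.mem_Icc] at hi
  rw [htut i]
  by_cases h2 : i - 1 ≤ m
  · rw [if_pos h2]
    have : m - (i - 1) = n - 1 - i := by omega
    rw [this]; ring
  · rw [if_neg h2, Nat.choose_eq_zero_of_lt (by omega)]
    simp

end Aux

section Rank

lemma rk_mono {S A : Finset (Submodule ℂ V)} (h : S ⊆ A) : rk S ≤ rk A :=
  Nat.sub_le_sub_left (Submodule.finrank_mono (Finset.inf_mono h)) _

lemma rk_le_card : ∀ (S : Finset (Submodule ℂ V)),
    (∀ H ∈ S, Module.finrank ℂ H + 1 = Module.finrank ℂ V) → rk S ≤ S.card := by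
  classical
  intro S
  induction S using Finset.induction_on with
  | empty =>
    intro _
    unfold rk
    rw [Finset.inf_empty, finrank_top, Nat.sub_self]
    exact Nat.zero_le _
  | @insert H S hH ih =>
    intro hS
    have h1 := Submodule.finrank_sup_add_finrank_inf_eq H (S.inf id)
    have h2 : Module.finrank ℂ ↥(H ⊔ S.inf id) ≤ Module.finrank ℂ V :=
      Submodule.finrank_le _
    have h3 := ih (fun K hK => hS K (Finset.mem_insert_of_mem hK))
    have h4 := hS H (Finset.mem_insert_self H S)
    have h6 : (insert H S).inf id = H ⊓ S.inf id := by
      rw [Finset.inf_insert]; rfl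
    have h5 : rk (insert H S) =
        Module.finrank ℂ V - Module.finrank ℂ ↥(H ⊓ S.inf id) := by
      unfold rk
      rw [h6]
    rw [h5, Finset.card_insert_of_notMem hH]
    unfold rk at h3
    omega

end Rank

/-- Leading term of the Hilbert polynomial of `S/I(A)` is combinatorial:
`[h^{ℓ−1}k^{n−1}] χ̂(A,−h,k−h)(ph+qk)^{n−2}/(n−2)!
  = (1/(n−2)!) Σ_{i=1}^ℓ t_{i0} C(n−2,i−1) p^{i−1} q^{n−1−i}`. -/
theorem hilbert_leading_term (A : Finset (Submodule ℂ V))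
    (hA : ∀ H ∈ A, Module.finrank ℂ H + 1 = Module.finrank ℂ V)
    (hess : rk A = Module.finrank ℂ V) (hn : 2 ≤ A.card) (p q : ℚ) :
    (MvPolynomial.coeff (Finsupp.single 0 (rk A - 1) + Finsupp.single 1 (A.card - 1))
        (chihatSub A * (C p * X 0 + C q * X 1) ^ (A.card - 2))) *
        ((Nat.factorial (A.card - 2) : ℚ))⁻¹ =
      ((Nat.factorial (A.card - 2) : ℚ))⁻¹ *
        ∑ i ∈ Finset.Icc 1 (rk A),
          ((MvPolynomial.coeff (Finsupp.single 0 i) (tutteA A) : ℤ) : ℚ) *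
            ((A.card - 2).choose (i - 1)) * p ^ (i - 1) * q ^ (A.card - 1 - i) := by
  have hℓ1 : 1 ≤ rk A := by
    obtain ⟨H, hH⟩ := Finset.card_pos.mp (by omega : 0 < A.card)
    have := hA H hH
    omega
  have hkey := key A.powerset rk Finset.card (rk A) A.card
    (fun S hS => rk_mono (Finset.mem_powerset.1 hS))
    (fun S hS => rk_le_card S (fun H hH => hA H (Finset.mem_powerset.1 hS hH)))
    hℓ1 hn p q
  exact (congrArg (· * ((Nat.factorial (A.card - 2) : ℚ))⁻¹) hkey).trans (mul_comm _ _)
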